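/- The following are equivalent: (i) L̄'_r is not right continuous at 0 (i.e. L̄'_r(0) ≠ L̄'_r(0⁺)); (ii) L̄|[0,+∞) is not lower semicontinuous at 0, L̄'_r(0) = −∞ and L̄'_r(0⁺) > −∞; (iii) L̄|[0,+∞) is not lower semicontinuous at 0 and L̄'_r(0⁺) ∈ ℝ; (iv) L̄'_r(0) = −∞ and L̄'_r(0⁺) > −∞. The same equivalences hold with 'L̄'_r(0⁺) > −∞' replaced by 'L̄'_r(0⁺) ∈ ℝ'. In particular, L̄'_r(0) ∈ ℝ if and only if L̄'_r(0) = L̄'_r(0⁺) ∈ ℝ. -/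

import Mathlib

open Filter MeasureTheory Set Topology

noncomputable section

/-- `c · log m` as an extended real number, where `m ∈ [0,∞]`. -/
def elog (c : ℝ) (m : ENNReal) : EReal := (c : EReal) * ENNReal.log m

/-- The generalized log-moment generating function `L̄` associated with the net
`(μ_α, c_α)` indexed by the filter `lf`:
`L̄(t) = limsup_α c_α · log ∫ exp(t·x/c_α) dμ_α(x)`. -/
def genLogMGF {ι : Type*} (lf : Filter ι) (μ : ι → Measure ℝ) (c : ι → ℝ) (t : ℝ) : EReal :=
  Filter.limsup
    (fun i => elog (c i) (∫⁻ x : ℝ, ENNReal.ofReal (Real.exp (t * x / c i)) ∂ (μ i))) lf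

/-- Legendre–Fenchel transform of an `EReal`-valued function on `ℝ`, evaluated at an
extended real argument: `L*(x) = sup_t (t·x − L(t))`. -/
def LegendreEE (L : ℝ → EReal) (x : EReal) : EReal := ⨆ t : ℝ, ((t : EReal) * x - L t)

open Classical in
/-- The right derivative of a convex `EReal`-valued function at `t`, with the conventions
`L'_r(t) = +∞` when `L(s) = +∞` for all `s > t` and `L'_r(t) = -∞` when `L(s) = -∞` for
some `s > t`; otherwise it is the infimum of the right difference quotients. -/
def rightDerivE (L : ℝ → EReal) (t : ℝ) : EReal :=
  if ∀ s : ℝ, t < s → L s = ⊤ then ⊤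
  else if ∃ s : ℝ, t < s ∧ L s = ⊥ then ⊥
  else ⨅ s ∈ Set.Ioi t, (L s - L t) * (((s - t)⁻¹ : ℝ) : EReal)

/-- The left derivative of a convex `EReal`-valued function at `t` (supremum of left
difference quotients). -/
def leftDerivE (L : ℝ → EReal) (t : ℝ) : EReal :=
  ⨆ s ∈ Set.Iio t, (L t - L s) * (((t - s)⁻¹ : ℝ) : EReal)

/-- Right limit at `a` of an `EReal`-valued function (as a `limsup`; it coincides with
`lim_{t→a⁺} f(t)` whenever the latter exists, e.g. for monotone or convex `f`). -/
def rightLimE (f : ℝ → EReal) (a : ℝ) : EReal := Filter.limsup f (nhdsWithin a (Set.Ioi a))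

/-- Left limit at `a` of an `EReal`-valued function (as a `limsup`; it coincides with
`lim_{t→a⁻} f(t)` whenever the latter exists). -/
def leftLimE (f : ℝ → EReal) (a : ℝ) : EReal := Filter.limsup f (nhdsWithin a (Set.Iio a))

/-- `L` is affine on the interval `(a, b]`. -/
def AffineOnIoc (L : ℝ → EReal) (a b : ℝ) : Prop :=
  ∃ p q : ℝ, ∀ s ∈ Set.Ioc a b, L s = ((p * s + q : ℝ) : EReal)

/-- `λ̃ = sup {t > λ : L is affine on (λ, t]}` (equal to `λ` if there is no such `t`). -/
def tildeOf (L : ℝ → EReal) (lam : ℝ) : ℝ :=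
  sSup (insert lam {t : ℝ | lam < t ∧ AffineOnIoc L lam t})

/-- Differentiability at `t` of an `EReal`-valued function: `L(t)` is finite and the
difference quotients converge to a (finite) real number. -/
def EDifferentiableAt (L : ℝ → EReal) (t : ℝ) : Prop :=
  (∃ r : ℝ, L t = (r : EReal)) ∧
  ∃ d : ℝ, Filter.Tendsto (fun s => (L s - L t) * (((s - t)⁻¹ : ℝ) : EReal))
    (nhdsWithin t {t}ᶜ) (nhds (d : EReal))

/-- The function `l₀(x) = − lim_{ε→0⁺} limsup_α c_α · log μ_α((x−ε, x+ε))` (the limit over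
`ε` exists by monotonicity and equals the infimum). -/
def l0fun {ι : Type*} (lf : Filter ι) (μ : ι → Measure ℝ) (c : ι → ℝ) (x : ℝ) : EReal :=
  - ⨅ ε ∈ Set.Ioi (0:ℝ),
      Filter.limsup (fun i => elog (c i) (μ i (Set.Ioo (x - ε) (x + ε)))) lf

/-- `L` restricted to `[0,∞)` is proper: `(−∞,+∞]`-valued with at least one finite value. -/
def LbarProper (L : ℝ → EReal) : Prop :=
  (∀ t : ℝ, 0 ≤ t → L t ≠ ⊥) ∧ ∃ t : ℝ, 0 ≤ t ∧ L t ≠ ⊤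

/-- `μ([x, y])` for extended-real endpoints `x, y`, with `μ` regarded as a measure on
`[-∞, +∞]`. -/
def muIccE (μ : Measure ℝ) (x y : EReal) : ENNReal :=
  μ {z : ℝ | x ≤ (z : EReal) ∧ (z : EReal) ≤ y}

/-- `μ((x, y))` for extended-real endpoints `x, y`. -/
def muIooE (μ : Measure ℝ) (x y : EReal) : ENNReal :=
  μ {z : ℝ | x < (z : EReal) ∧ (z : EReal) < y}

open Classical in
/-- The Legendre transform extended to `[-∞,+∞]` by continuity, with the paper's
convention `L̄*(−∞) = −L̄(0⁺)`. -/
def LegendreExt (L : ℝ → EReal) (x : EReal) : EReal :=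
  if x = ⊥ then -(rightLimE L 0) else if x = ⊤ then ⊤ else LegendreEE L x

end

section Core

variable {L : ℝ → EReal}

lemma ereal_sub_zero (x : EReal) : x - 0 = x := by
  change x + (-0) = x
  rw [neg_zero, add_zero]

lemma rdE_top {t : ℝ} (h : ∀ s : ℝ, t < s → L s = ⊤) : rightDerivE L t = ⊤ := by
  rw [rightDerivE, if_pos h]

lemma rdE_bot {t : ℝ} (h1 : ∃ s : ℝ, t < s ∧ L s ≠ ⊤) (h2 : ∃ s : ℝ, t < s ∧ L s = ⊥) :
    rightDerivE L t = ⊥ := by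
  rw [rightDerivE, if_neg, if_pos h2]
  push_neg
  exact h1

lemma rdE_eq_inf {t : ℝ} (h1 : ∃ s : ℝ, t < s ∧ L s ≠ ⊤) (h2 : ∀ s : ℝ, t < s → L s ≠ ⊥) :
    rightDerivE L t = ⨅ s ∈ Set.Ioi t, (L s - L t) * (((s - t)⁻¹ : ℝ) : EReal) := by
  rw [rightDerivE, if_neg, if_neg]
  · rintro ⟨s, hs, hsb⟩; exact h2 s hs hsb
  · push_neg; exact h1

lemma rdE_le_slope {t s : ℝ} (hts : t < s) (h1 : L s ≠ ⊤) :
    rightDerivE L t ≤ (L s - L t) * (((s - t)⁻¹ : ℝ) : EReal) := by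
  rw [rightDerivE]
  split_ifs with hA hB
  · exact absurd (hA s hts) h1
  · exact bot_le
  · exact iInf₂_le s hts

lemma le_rdE {t : ℝ} {b : EReal} (h2 : ∀ s : ℝ, t < s → L s ≠ ⊥)
    (hb : ∀ s : ℝ, t < s → b ≤ (L s - L t) * (((s - t)⁻¹ : ℝ) : EReal)) :
    b ≤ rightDerivE L t := by
  rw [rightDerivE]
  split_ifs with hA hB
  · exact le_top
  · obtain ⟨s, hs, hsb⟩ := hB; exact absurd hsb (h2 s hs)
  · exact le_iInf₂ hb

/-- If `L` takes the value `⊥` somewhere on `(0,∞)`, both `D` and `R` are `⊥`. -/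
lemma bot_case (h : ∃ s : ℝ, 0 < s ∧ L s = ⊥) :
    rightDerivE L 0 = ⊥ ∧ rightLimE (rightDerivE L) 0 = ⊥ := by
  obtain ⟨s, hs, hsb⟩ := h
  have h1 : ∃ u : ℝ, (0:ℝ) < u ∧ L u ≠ ⊤ := ⟨s, hs, by rw [hsb]; exact bot_ne_top⟩
  constructor
  · exact rdE_bot h1 ⟨s, hs, hsb⟩
  · have hev : ∀ᶠ t in 𝓝[>] (0:ℝ), rightDerivE L t = ⊥ := by
      filter_upwards [Ioo_mem_nhdsGT_of_mem (by constructor <;> simp [hs] : (0:ℝ) ∈ Set.Ico 0 s)]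
        with t ht
      exact rdE_bot ⟨s, ht.2, by rw [hsb]; exact bot_ne_top⟩ ⟨s, ht.2, hsb⟩
    rw [rightLimE, Filter.limsup_congr hev]
    exact Filter.limsup_const _

/-- If `L = ⊤` on `(0,∞)`, both `D` and `R` are `⊤`. -/
lemma top_case (h : ∀ s : ℝ, 0 < s → L s = ⊤) :
    rightDerivE L 0 = ⊤ ∧ rightLimE (rightDerivE L) 0 = ⊤ := by
  constructor
  · exact rdE_top h
  · have hev : ∀ᶠ t in 𝓝[>] (0:ℝ), rightDerivE L t = ⊤ := by
      filter_upwards [self_mem_nhdsWithin] with t ht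
      exact rdE_top fun s hs => h s (lt_trans ht hs)
    rw [rightLimE, Filter.limsup_congr hev]
    exact Filter.limsup_const _

end Core
section Core2

variable {L : ℝ → EReal}

lemma D_le_slope0 (h0 : L 0 = 0) {u : ℝ} (hu : 0 < u) (hT : L u ≠ ⊤) :
    rightDerivE L 0 ≤ L u * ((u⁻¹ : ℝ) : EReal) := by
  have := rdE_le_slope hu hT
  rwa [h0, ereal_sub_zero, sub_zero] at this

lemma le_D (h2 : ∀ s : ℝ, 0 < s → L s ≠ ⊥) (h0 : L 0 = 0) {b : EReal}
    (hb : ∀ s : ℝ, 0 < s → b ≤ L s * ((s⁻¹ : ℝ) : EReal)) : b ≤ rightDerivE L 0 := by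
  refine le_rdE h2 fun s hs => ?_
  rw [h0, ereal_sub_zero, sub_zero]
  exact hb s hs

/-- Non-lower-semicontinuity forces `D = ⊥`. -/
lemma notLSC_D_bot (h0 : L 0 = 0)
    (h : ¬ LowerSemicontinuousWithinAt L (Set.Ici (0:ℝ)) 0) : rightDerivE L 0 = ⊥ := by
  rw [lowerSemicontinuousWithinAt_iff] at h
  push_neg at h
  obtain ⟨y', hy'0, hy'⟩ := h
  rw [h0] at hy'0
  obtain ⟨y, hy1, hy2⟩ := EReal.exists_between_coe_real hy'0
  have hy0 : y < 0 := by exact_mod_cast hy2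
  have hfreq : ∃ᶠ t in 𝓝[Set.Ici (0:ℝ)] 0, L t ≤ (y : EReal) := by
    exact hy'.mono fun t ht => le_trans ht hy1.le
  rw [(rightDerivE L 0).eq_bot_iff_forall_lt]
  intro M
  set M' : ℝ := min M 0 - 1 with hM'def
  have hM' : M' < 0 := by have := min_le_right M 0; simp only [hM'def]; linarith
  have hM'M : M' < M := by have := min_le_left M 0; simp only [hM'def]; linarith
  have hδ : (0:ℝ) < y / M' := div_pos_of_neg_of_neg hy0 hM'
  obtain ⟨t, htL, ht0, htδ⟩ :
      ∃ t : ℝ, L t ≤ (y : EReal) ∧ 0 ≤ t ∧ t < y / M' := by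
    obtain ⟨t, h1, h2, h3⟩ := (hfreq.and_eventually
      ((eventually_nhdsWithin_of_eventually_nhds
        (eventually_of_mem (Iio_mem_nhds hδ) (fun x hx => hx))).and
        self_mem_nhdsWithin)).exists
    exact ⟨t, h1, h3, h2⟩
  have htpos : 0 < t := by
    rcases ht0.lt_or_eq with h | h
    · exact h
    · exfalso
      rw [← h, h0] at htL
      exact absurd (by exact_mod_cast htL : (0:ℝ) ≤ y) (not_le.2 hy0)
  have hslope : rightDerivE L 0 ≤ L t * ((t⁻¹ : ℝ) : EReal) :=
    D_le_slope0 h0 htpos (fun hT => by rw [hT] at htL; exact absurd htL (by simp))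
  have h2 : L t * ((t⁻¹ : ℝ) : EReal) ≤ ((y * t⁻¹ : ℝ) : EReal) := by
    rw [EReal.coe_mul]
    exact mul_le_mul_of_nonneg_right htL
      (by exact_mod_cast (inv_nonneg.2 htpos.le : (0:ℝ) ≤ t⁻¹))
  have h3 : y * t⁻¹ < M' := by
    have h4 : y < M' * t := by
      have h5 : M' * t > M' * (y / M') := by
        exact (mul_lt_mul_left_of_neg hM').2 htδ
      rw [mul_div_cancel₀ _ hM'.ne] at h5
      linarith
    calc y * t⁻¹ = y / t := by ring
      _ < M' := (div_lt_iff₀ htpos).2 (by linarith)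
  calc rightDerivE L 0 ≤ ((y * t⁻¹ : ℝ) : EReal) := le_trans hslope h2
    _ < (M' : EReal) := by exact_mod_cast h3
    _ ≤ (M : EReal) := by exact_mod_cast hM'M.le

end Core2
section Core3

variable {L : ℝ → EReal}

lemma ereal_exists_real {x : EReal} (hb : x ≠ ⊥) (ht : x ≠ ⊤) : ∃ r : ℝ, x = (r : EReal) := by
  induction x with
  | bot => exact absurd rfl hb
  | coe r => exact ⟨r, rfl⟩
  | top => exact absurd rfl ht

lemma D_top_R_top (h0 : L 0 = 0) (hD : rightDerivE L 0 = ⊤) :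
    rightLimE (rightDerivE L) 0 = ⊤ := by
  by_cases hbot : ∃ s : ℝ, 0 < s ∧ L s = ⊥
  · rw [(bot_case hbot).1] at hD; exact absurd hD bot_ne_top
  by_cases htop : ∀ s : ℝ, 0 < s → L s = ⊤
  · exact (top_case htop).2
  push_neg at hbot htop
  obtain ⟨s₀, hs₀, hs₀T⟩ := htop
  obtain ⟨r, hr⟩ := ereal_exists_real (hbot s₀ hs₀) hs₀T
  have := D_le_slope0 h0 hs₀ hs₀T
  rw [hD, hr, ← EReal.coe_mul] at this
  exact absurd this (EReal.coe_lt_top _).not_ge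

/-- If `D` is a real number, then `R = D`. -/
lemma D_real_R_eq
    (h0 : L 0 = 0)
    (hK2 : ∀ t s : ℝ, 0 < t → t < s → L s ≠ ⊥ → L t ≤ ((t / s : ℝ) : EReal) * L s)
    {d : ℝ} (hD : rightDerivE L 0 = (d : EReal)) :
    rightLimE (rightDerivE L) 0 = (d : EReal) := by
  have Hnb : ∀ s : ℝ, 0 < s → L s ≠ ⊥ := by
    intro s hs hsb
    have h := (bot_case ⟨s, hs, hsb⟩).1
    rw [hD] at h; exact (EReal.coe_ne_bot d) h
  have hnetop : ∃ s : ℝ, 0 < s ∧ L s ≠ ⊤ := by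
    by_contra hall; push_neg at hall
    have h := (top_case hall).1
    rw [hD] at h; exact (EReal.coe_ne_top d) h
  have hDle : ∀ u : ℝ, 0 < u → (d : EReal) ≤ L u * ((u⁻¹ : ℝ) : EReal) := by
    intro u hu
    by_cases hT : L u = ⊤
    · rw [hT, EReal.top_mul_coe_of_pos (by positivity)]; exact le_top
    · have h := D_le_slope0 h0 hu hT; rwa [hD] at h
  -- (a) d ≤ R
  have ha : ∀ t : ℝ, 0 < t → (d : EReal) ≤ rightDerivE L t := by
    intro t ht
    by_cases hTt : L t = ⊤
    · have htop' : ∀ s, t < s → L s = ⊤ := by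
        intro s hs
        by_contra hsT
        obtain ⟨rs, hrs⟩ := ereal_exists_real (Hnb s (ht.trans hs)) hsT
        have h2 := hK2 t s ht hs (Hnb s (ht.trans hs))
        rw [hTt, hrs, ← EReal.coe_mul] at h2
        exact absurd h2 (EReal.coe_lt_top _).not_ge
      rw [rdE_top htop']; exact le_top
    · obtain ⟨rt, hrt⟩ := ereal_exists_real (Hnb t ht) hTt
      refine le_rdE (fun s hs => Hnb s (ht.trans hs)) (fun s hs => ?_)
      by_cases hsT : L s = ⊤
      · rw [hsT, hrt, EReal.top_sub_coe,
          EReal.top_mul_coe_of_pos (by simp [sub_pos.2 hs] : (0:ℝ) < (s - t)⁻¹)]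
        exact le_top
      · obtain ⟨rs, hrs⟩ := ereal_exists_real (Hnb s (ht.trans hs)) hsT
        have hk2 := hK2 t s ht hs (Hnb s (ht.trans hs))
        rw [hrt, hrs, ← EReal.coe_mul] at hk2
        have hk2' : rt ≤ t / s * rs := by exact_mod_cast hk2
        have hds := hDle s (ht.trans hs)
        rw [hrs, ← EReal.coe_mul] at hds
        have hds' : d ≤ rs * s⁻¹ := by exact_mod_cast hds
        rw [hrt, hrs, ← EReal.coe_sub, ← EReal.coe_mul]
        have hreal : d ≤ (rs - rt) * (s - t)⁻¹ := by
          have hs0 : (0:ℝ) < s := ht.trans hs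
          have hst : (0:ℝ) < s - t := sub_pos.2 hs
          rw [mul_comm, ← div_eq_inv_mul, le_div_iff₀ hst]
          have e1 : rt * s ≤ t * rs := by
            have := mul_le_mul_of_nonneg_right hk2' hs0.le
            calc rt * s ≤ t / s * rs * s := this
              _ = t * rs := by field_simp
          have e2 : d * s ≤ rs := by
            have := mul_le_mul_of_nonneg_right hds' hs0.le
            calc d * s ≤ rs * s⁻¹ * s := this
              _ = rs := by field_simp
          have e3 : d * (s - t) * s ≤ (rs - rt) * s := by nlinarith
          exact le_of_mul_le_mul_right (by linarith) hs0
        exact_mod_cast hreal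
  have haR : (d : EReal) ≤ rightLimE (rightDerivE L) 0 := by
    refine Filter.le_limsup_of_frequently_le ?_
    have hev : ∀ᶠ t in nhdsWithin (0:ℝ) (Set.Ioi 0), (d:EReal) ≤ rightDerivE L t :=
      eventually_nhdsWithin_of_forall fun t ht => ha t ht
    exact @Filter.Eventually.frequently _ _ (nhdsGT_neBot 0) _ hev
  -- (b) R ≤ d + ε
  have hbR : ∀ ε : ℝ, 0 < ε → rightLimE (rightDerivE L) 0 ≤ ((d + ε : ℝ) : EReal) := by
    intro ε hε
    obtain ⟨u, hu, hslope⟩ : ∃ u : ℝ, 0 < u ∧ L u * ((u⁻¹ : ℝ) : EReal) < ((d + ε : ℝ) : EReal) := by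
      by_contra hc; push_neg at hc
      have := le_D Hnb h0 (fun s hs => hc s hs)
      rw [hD] at this
      have : (d:ℝ) + ε ≤ d := by exact_mod_cast this
      linarith
    have huT : L u ≠ ⊤ := by
      intro hT
      rw [hT, EReal.top_mul_coe_of_pos (by positivity)] at hslope
      exact absurd hslope (by simp)
    obtain ⟨r, hr⟩ := ereal_exists_real (Hnb u hu) huT
    rw [hr, ← EReal.coe_mul] at hslope
    have hru : r * u⁻¹ < d + ε := by exact_mod_cast hslope
    have hev : ∀ᶠ t in 𝓝[>] (0:ℝ), rightDerivE L t ≤ (((r - d * t) * (u - t)⁻¹ : ℝ) : EReal) := by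
      filter_upwards [Ioo_mem_nhdsGT_of_mem (by constructor <;> simp [hu] : (0:ℝ) ∈ Set.Ico 0 u)]
        with t ht
      have htpos := ht.1
      have htu := ht.2
      have hTt : L t ≠ ⊤ := by
        intro hT
        have h2 := hK2 t u htpos htu (Hnb u hu)
        rw [hT, hr, ← EReal.coe_mul] at h2
        exact absurd h2 (EReal.coe_lt_top _).not_ge
      obtain ⟨rt, hrt⟩ := ereal_exists_real (Hnb t htpos) hTt
      have hds := hDle t htpos
      rw [hrt, ← EReal.coe_mul] at hds
      have hds' : d ≤ rt * t⁻¹ := by exact_mod_cast hds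
      have hdt : d * t ≤ rt := by
        have := mul_le_mul_of_nonneg_right hds' htpos.le
        calc d * t ≤ rt * t⁻¹ * t := this
          _ = rt := by field_simp
      calc rightDerivE L t ≤ (L u - L t) * (((u - t)⁻¹ : ℝ) : EReal) := rdE_le_slope htu huT
        _ = (((r - rt) * (u - t)⁻¹ : ℝ) : EReal) := by
            rw [hr, hrt, ← EReal.coe_sub, ← EReal.coe_mul]
        _ ≤ (((r - d * t) * (u - t)⁻¹ : ℝ) : EReal) := by
            have : (r - rt) * (u - t)⁻¹ ≤ (r - d * t) * (u - t)⁻¹ := by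
              apply mul_le_mul_of_nonneg_right (by linarith)
                (inv_nonneg.2 (by linarith : (0:ℝ) ≤ u - t))
            exact_mod_cast this
    have htend : Filter.Tendsto (fun t : ℝ => (((r - d * t) * (u - t)⁻¹ : ℝ) : EReal))
        (𝓝[>] (0:ℝ)) (nhds ((r * u⁻¹ : ℝ) : EReal)) := by
      rw [EReal.tendsto_coe]
      have hcont : Filter.Tendsto (fun t : ℝ => (r - d * t) * (u - t)⁻¹) (nhds 0)
          (nhds ((r - d * 0) * (u - 0)⁻¹)) := by
        apply ContinuousAt.tendsto
        exact (continuousAt_const.sub (continuousAt_const.mul continuousAt_id)).mul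
          ((continuousAt_const.sub continuousAt_id).inv₀ (by simpa using hu.ne'))
      simpa using hcont.mono_left nhdsWithin_le_nhds
    calc rightLimE (rightDerivE L) 0 ≤
        Filter.limsup (fun t : ℝ => (((r - d * t) * (u - t)⁻¹ : ℝ) : EReal)) (𝓝[>] (0:ℝ)) :=
          Filter.limsup_le_limsup hev
      _ = ((r * u⁻¹ : ℝ) : EReal) := htend.limsup_eq
      _ ≤ ((d + ε : ℝ) : EReal) := by exact_mod_cast hru.le
  -- conclude
  have hRnetop : rightLimE (rightDerivE L) 0 ≠ ⊤ := by
    intro hT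
    have := hbR 1 one_pos
    rw [hT] at this
    exact absurd this (EReal.coe_lt_top _).not_ge
  have hRnebot : rightLimE (rightDerivE L) 0 ≠ ⊥ := by
    intro hB
    rw [hB, le_bot_iff] at haR
    exact (EReal.coe_ne_bot _) haR
  obtain ⟨ρ, hρ⟩ := ereal_exists_real hRnebot hRnetop
  rw [hρ] at haR hbR ⊢
  have h1 : d ≤ ρ := by exact_mod_cast haR
  have h2 : ρ ≤ d := by
    by_contra hc; push_neg at hc
    have := hbR ((ρ - d)/2) (by linarith)
    have : ρ ≤ d + (ρ - d)/2 := by exact_mod_cast this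
    linarith
  exact_mod_cast le_antisymm h2 h1

end Core3
section Core4

variable {L : ℝ → EReal}

/-- If `D = ⊥` and `R ≠ ⊥` then `R` is real. -/
lemma D_bot_R_real
    (h0 : L 0 = 0)
    (hK2 : ∀ t s : ℝ, 0 < t → t < s → L s ≠ ⊥ → L t ≤ ((t / s : ℝ) : EReal) * L s)
    (hconv : ∀ u v w : ℝ, 0 < u → u < v → v < w → L u ≠ ⊥ → L w ≠ ⊥ →
      L v ≤ (((w - v) / (w - u) : ℝ) : EReal) * L u + (((v - u) / (w - u) : ℝ) : EReal) * L w)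
    (hD : rightDerivE L 0 = ⊥) (hR : rightLimE (rightDerivE L) 0 ≠ ⊥) :
    ∃ ρ : ℝ, rightLimE (rightDerivE L) 0 = (ρ : EReal) := by
  have Hnb : ∀ s : ℝ, 0 < s → L s ≠ ⊥ := fun s hs hsb => hR (bot_case ⟨s, hs, hsb⟩).2
  obtain ⟨s₀, hs₀, hneg⟩ : ∃ s₀ : ℝ, 0 < s₀ ∧ L s₀ * ((s₀⁻¹ : ℝ) : EReal) < 0 := by
    by_contra hc; push_neg at hc
    have h := le_D Hnb h0 (b := (0 : EReal)) hc
    rw [hD, le_bot_iff] at h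
    exact (by simp : (0 : EReal) ≠ ⊥) h
  have hs₀T : L s₀ ≠ ⊤ := by
    intro hT
    rw [hT, EReal.top_mul_coe_of_pos (by positivity)] at hneg
    exact absurd hneg not_top_lt
  obtain ⟨r, hr⟩ := ereal_exists_real (Hnb s₀ hs₀) hs₀T
  rw [hr, ← EReal.coe_mul] at hneg
  have hrneg : r * s₀⁻¹ < 0 := by exact_mod_cast hneg
  have hrn : r < 0 := by nlinarith [inv_pos.2 hs₀]
  set v : ℝ := s₀ / 2 with hvdef
  have hv : 0 < v := by positivity
  have hvs : v < s₀ := by rw [hvdef]; linarith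
  have hvT : L v ≠ ⊤ := by
    intro hT
    have h2 := hK2 v s₀ hv hvs (Hnb s₀ hs₀)
    rw [hT, hr, ← EReal.coe_mul] at h2
    exact absurd h2 (EReal.coe_lt_top _).not_ge
  obtain ⟨rv, hrv⟩ := ereal_exists_real (Hnb v hv) hvT
  have hrvneg : rv < 0 := by
    have h2 := hK2 v s₀ hv hvs (Hnb s₀ hs₀)
    rw [hrv, hr, ← EReal.coe_mul] at h2
    have : rv ≤ v / s₀ * r := by exact_mod_cast h2
    nlinarith [div_pos hv hs₀]
  set m : ℝ := rv * s₀ / (s₀ - v) with hmdef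
  set C : ℝ := (|r| + |m|) / (s₀ - v) with hCdef
  have hsv : (0:ℝ) < s₀ - v := by linarith
  have hbound : ∀ u : ℝ, 0 < u → u < v → rightDerivE L u ≤ ((C : ℝ) : EReal) := by
    intro u hu huv
    have hus : u < s₀ := huv.trans hvs
    have hsu : (0:ℝ) < s₀ - u := by linarith
    have huT : L u ≠ ⊤ := by
      intro hT
      have h2 := hK2 u v hu huv (Hnb v hv)
      rw [hT, hrv, ← EReal.coe_mul] at h2
      exact absurd h2 (EReal.coe_lt_top _).not_ge
    obtain ⟨ru, hru⟩ := ereal_exists_real (Hnb u hu) huT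
    have hcv := hconv u v s₀ hu huv hvs (Hnb u hu) (Hnb s₀ hs₀)
    rw [hru, hrv, hr, ← EReal.coe_mul, ← EReal.coe_mul, ← EReal.coe_add] at hcv
    have hcv' : rv ≤ (s₀ - v) / (s₀ - u) * ru + (v - u) / (s₀ - u) * r := by exact_mod_cast hcv
    have h1 : rv * (s₀ - u) ≤ (s₀ - v) * ru + (v - u) * r := by
      have h2 := mul_le_mul_of_nonneg_right hcv' hsu.le
      have h3 : ((s₀ - v) / (s₀ - u) * ru + (v - u) / (s₀ - u) * r) * (s₀ - u)
          = (s₀ - v) * ru + (v - u) * r := by field_simp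
      linarith [h3 ▸ h2]
    have hm : m ≤ ru := by
      have h4 : m * (s₀ - v) = rv * s₀ := by rw [hmdef, div_mul_cancel₀ _ hsv.ne']
      nlinarith
    calc rightDerivE L u ≤ (L s₀ - L u) * (((s₀ - u)⁻¹ : ℝ) : EReal) := rdE_le_slope hus hs₀T
      _ = (((r - ru) * (s₀ - u)⁻¹ : ℝ) : EReal) := by
          rw [hr, hru, ← EReal.coe_sub, ← EReal.coe_mul]
      _ ≤ ((C : ℝ) : EReal) := by
          have hgoal : (r - ru) * (s₀ - u)⁻¹ ≤ C := by
            have e1 : r - ru ≤ |r| + |m| := by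
              have := le_abs_self r
              have := neg_abs_le m
              linarith
            have e2 : (s₀ - u)⁻¹ ≤ (s₀ - v)⁻¹ := by
              apply inv_anti₀ hsv
              linarith
            rcases le_or_gt (r - ru) 0 with hle | hlt
            · have : (r - ru) * (s₀ - u)⁻¹ ≤ 0 := mul_nonpos_of_nonpos_of_nonneg hle (by positivity)
              have hC0 : (0:ℝ) ≤ C := by rw [hCdef]; positivity
              linarith
            · calc (r - ru) * (s₀ - u)⁻¹ ≤ (|r| + |m|) * (s₀ - v)⁻¹ :=
                  mul_le_mul e1 e2 (by positivity) (by positivity)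
                _ = C := by rw [hCdef]; ring
          exact_mod_cast hgoal
  have hRC : rightLimE (rightDerivE L) 0 ≤ ((C : ℝ) : EReal) := by
    have hev : ∀ᶠ t in nhdsWithin (0:ℝ) (Set.Ioi 0), rightDerivE L t ≤ ((C : ℝ) : EReal) := by
      filter_upwards [Ioo_mem_nhdsGT_of_mem (by constructor <;> simp [hv] : (0:ℝ) ∈ Set.Ico 0 v)]
        with t ht
      exact hbound t ht.1 ht.2
    calc rightLimE (rightDerivE L) 0 ≤
        Filter.limsup (fun _ : ℝ => ((C : ℝ) : EReal)) (nhdsWithin (0:ℝ) (Set.Ioi 0)) :=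
          Filter.limsup_le_limsup hev
      _ = ((C : ℝ) : EReal) :=
          @Filter.limsup_const _ _ _ (nhdsWithin (0:ℝ) (Set.Ioi 0)) (nhdsGT_neBot 0) _
  have hRT : rightLimE (rightDerivE L) 0 ≠ ⊤ := by
    intro hT; rw [hT] at hRC
    exact absurd hRC (EReal.coe_lt_top _).not_ge
  exact ereal_exists_real hR hRT

/-- If `D = ⊥` and `R` is real, then `L` is not lsc at `0` within `[0,∞)`. -/
lemma D_bot_R_real_notLSC
    (h0 : L 0 = 0)
    (hK2 : ∀ t s : ℝ, 0 < t → t < s → L s ≠ ⊥ → L t ≤ ((t / s : ℝ) : EReal) * L s)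
    {ρ : ℝ} (hR : rightLimE (rightDerivE L) 0 = (ρ : EReal))
    (hD : rightDerivE L 0 = ⊥) :
    ¬ LowerSemicontinuousWithinAt L (Set.Ici (0:ℝ)) 0 := by
  intro hLSC
  have Hnb : ∀ s : ℝ, 0 < s → L s ≠ ⊥ := by
    intro s hs hsb
    rw [(bot_case ⟨s, hs, hsb⟩).2] at hR
    exact (EReal.coe_ne_bot ρ) hR.symm
  obtain ⟨s, hs, hsl⟩ : ∃ s : ℝ, 0 < s ∧ L s * ((s⁻¹ : ℝ) : EReal) < ((ρ - 1 : ℝ) : EReal) := by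
    by_contra hc; push_neg at hc
    have h := le_D Hnb h0 hc
    rw [hD, le_bot_iff] at h
    exact (EReal.coe_ne_bot _) h
  have hsT : L s ≠ ⊤ := by
    intro hT
    rw [hT, EReal.top_mul_coe_of_pos (by positivity)] at hsl
    exact absurd hsl not_top_lt
  obtain ⟨r, hrr⟩ := ereal_exists_real (Hnb s hs) hsT
  rw [hrr, ← EReal.coe_mul] at hsl
  have hr1 : r * s⁻¹ < ρ - 1 := by exact_mod_cast hsl
  have key : ∀ ε : ℝ, 0 < ε → ρ ≤ (r + ε) * s⁻¹ := by
    intro ε hε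
    have hev1 : ∀ᶠ t in nhdsWithin (0:ℝ) (Set.Ioi 0), ((-ε : ℝ) : EReal) < L t := by
      have h2 := (lowerSemicontinuousWithinAt_iff.1 hLSC) ((-ε : ℝ) : EReal) (by rw [h0]; exact_mod_cast (by linarith : -ε < (0:ℝ)))
      exact h2.filter_mono (nhdsWithin_mono 0 Set.Ioi_subset_Ici_self)
    have hev : ∀ᶠ t in nhdsWithin (0:ℝ) (Set.Ioi 0),
        rightDerivE L t ≤ (((r + ε) * (s - t)⁻¹ : ℝ) : EReal) := by
      filter_upwards [hev1,
        Ioo_mem_nhdsGT_of_mem (by constructor <;> simp [hs] : (0:ℝ) ∈ Set.Ico 0 s)] with t hLt ht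
      calc rightDerivE L t ≤ (L s - L t) * (((s - t)⁻¹ : ℝ) : EReal) := rdE_le_slope ht.2 hsT
        _ ≤ ((r + ε : ℝ) : EReal) * (((s - t)⁻¹ : ℝ) : EReal) := by
            apply mul_le_mul_of_nonneg_right _
              (by exact_mod_cast (inv_nonneg.2 (by linarith [ht.2] : (0:ℝ) ≤ s - t)))
            rw [hrr]
            calc (r : EReal) - L t ≤ (r : EReal) - ((-ε : ℝ) : EReal) :=
                EReal.sub_le_sub (le_refl _) hLt.le
              _ = ((r + ε : ℝ) : EReal) := by rw [← EReal.coe_sub]; norm_num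
        _ = (((r + ε) * (s - t)⁻¹ : ℝ) : EReal) := (EReal.coe_mul _ _).symm
    have htend : Filter.Tendsto (fun t : ℝ => (((r + ε) * (s - t)⁻¹ : ℝ) : EReal))
        (nhdsWithin (0:ℝ) (Set.Ioi 0)) (nhds (((r + ε) * s⁻¹ : ℝ) : EReal)) := by
      rw [EReal.tendsto_coe]
      have hcont : Filter.Tendsto (fun t : ℝ => (r + ε) * (s - t)⁻¹) (nhds 0)
          (nhds ((r + ε) * (s - 0)⁻¹)) := by
        apply ContinuousAt.tendsto
        exact continuousAt_const.mul
          ((continuousAt_const.sub continuousAt_id).inv₀ (by simpa using hs.ne'))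
      simpa using hcont.mono_left nhdsWithin_le_nhds
    have hfin : (ρ : EReal) ≤ (((r + ε) * s⁻¹ : ℝ) : EReal) := by
      rw [← hR]
      calc rightLimE (rightDerivE L) 0 ≤
          Filter.limsup (fun t : ℝ => (((r + ε) * (s - t)⁻¹ : ℝ) : EReal))
            (nhdsWithin (0:ℝ) (Set.Ioi 0)) := Filter.limsup_le_limsup hev
        _ = (((r + ε) * s⁻¹ : ℝ) : EReal) := htend.limsup_eq
    exact_mod_cast hfin
  have hss : s * s⁻¹ = 1 := mul_inv_cancel₀ hs.ne'
  have h1 : ρ ≤ r * s⁻¹ := by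
    by_contra hc; push_neg at hc
    have hεpos : 0 < (ρ - r * s⁻¹) * s / 2 := by nlinarith
    have h2 := key _ hεpos
    have h3 : (r + (ρ - r * s⁻¹) * s / 2) * s⁻¹ = r * s⁻¹ + (ρ - r * s⁻¹) / 2 := by
      field_simp
    rw [h3] at h2
    linarith
  linarith

end Core4
section Assemble

/-- The purely convex-analytic core of the theorem. -/
lemma main_core (L : ℝ → EReal)
    (h0 : L 0 = 0)
    (hK2 : ∀ t s : ℝ, 0 < t → t < s → L s ≠ ⊥ → L t ≤ ((t / s : ℝ) : EReal) * L s)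
    (hconv : ∀ u v w : ℝ, 0 < u → u < v → v < w → L u ≠ ⊥ → L w ≠ ⊥ →
      L v ≤ (((w - v) / (w - u) : ℝ) : EReal) * L u + (((v - u) / (w - u) : ℝ) : EReal) * L w) :
    ((rightDerivE L 0 ≠ rightLimE (rightDerivE L) 0) ↔ (¬ LowerSemicontinuousWithinAt L (Set.Ici (0:ℝ)) 0 ∧ rightDerivE L 0 = ⊥ ∧ rightLimE (rightDerivE L) 0 ≠ ⊥)) ∧
    ((rightDerivE L 0 ≠ rightLimE (rightDerivE L) 0) ↔ (¬ LowerSemicontinuousWithinAt L (Set.Ici (0:ℝ)) 0 ∧ ∃ r : ℝ, rightLimE (rightDerivE L) 0 = (r : EReal))) ∧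
    ((rightDerivE L 0 ≠ rightLimE (rightDerivE L) 0) ↔ (rightDerivE L 0 = ⊥ ∧ rightLimE (rightDerivE L) 0 ≠ ⊥)) ∧
    ((rightDerivE L 0 ≠ rightLimE (rightDerivE L) 0) ↔ (¬ LowerSemicontinuousWithinAt L (Set.Ici (0:ℝ)) 0 ∧ rightDerivE L 0 = ⊥ ∧ ∃ r : ℝ, rightLimE (rightDerivE L) 0 = (r : EReal))) ∧
    ((rightDerivE L 0 ≠ rightLimE (rightDerivE L) 0) ↔ (rightDerivE L 0 = ⊥ ∧ ∃ r : ℝ, rightLimE (rightDerivE L) 0 = (r : EReal))) ∧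
    ((∃ r : ℝ, rightDerivE L 0 = (r : EReal)) ↔
      (rightDerivE L 0 = rightLimE (rightDerivE L) 0 ∧ ∃ r : ℝ, rightDerivE L 0 = (r : EReal))) := by
  have hCE : (rightDerivE L 0 ≠ rightLimE (rightDerivE L) 0) ↔
      (rightDerivE L 0 = ⊥ ∧ rightLimE (rightDerivE L) 0 ≠ ⊥) := by
    constructor
    · intro hne
      have hDbot : rightDerivE L 0 = ⊥ := by
        by_contra hDb
        rcases eq_or_ne (rightDerivE L 0) ⊤ with hDT | hDT
        · exact hne (hDT.trans (D_top_R_top h0 hDT).symm)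
        · obtain ⟨d, hd⟩ := ereal_exists_real hDb hDT
          exact hne (hd.trans (D_real_R_eq h0 hK2 hd).symm)
      exact ⟨hDbot, fun hRb => hne (hDbot.trans hRb.symm)⟩
    · rintro ⟨h1, h2⟩ h3
      exact h2 (h3.symm.trans h1)
  have hFin : rightDerivE L 0 = ⊥ → rightLimE (rightDerivE L) 0 ≠ ⊥ →
      ∃ ρ : ℝ, rightLimE (rightDerivE L) 0 = (ρ : EReal) :=
    fun h1 h2 => D_bot_R_real h0 hK2 hconv h1 h2
  have hBl : rightDerivE L 0 = ⊥ → rightLimE (rightDerivE L) 0 ≠ ⊥ →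
      ¬ LowerSemicontinuousWithinAt L (Set.Ici (0:ℝ)) 0 := by
    intro h1 h2
    obtain ⟨ρ, hρ⟩ := hFin h1 h2
    exact D_bot_R_real_notLSC h0 hK2 hρ h1
  have hB' : ¬ LowerSemicontinuousWithinAt L (Set.Ici (0:ℝ)) 0 → rightDerivE L 0 = ⊥ :=
    notLSC_D_bot h0
  have hG : (∃ r : ℝ, rightDerivE L 0 = (r : EReal)) →
      rightDerivE L 0 = rightLimE (rightDerivE L) 0 := by
    rintro ⟨r, hr⟩
    exact hr.trans (D_real_R_eq h0 hK2 hr).symm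
  refine ⟨?_, ?_, hCE, ?_, ?_, ?_⟩
  · constructor
    · intro h
      obtain ⟨h1, h2⟩ := hCE.1 h
      exact ⟨hBl h1 h2, h1, h2⟩
    · rintro ⟨_, h1, h2⟩
      exact hCE.2 ⟨h1, h2⟩
  · constructor
    · intro h
      obtain ⟨h1, h2⟩ := hCE.1 h
      exact ⟨hBl h1 h2, hFin h1 h2⟩
    · rintro ⟨hl, ρ, hρ⟩
      exact hCE.2 ⟨hB' hl, by rw [hρ]; exact EReal.coe_ne_bot ρ⟩
  · constructor
    · intro h
      obtain ⟨h1, h2⟩ := hCE.1 h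
      exact ⟨hBl h1 h2, h1, hFin h1 h2⟩
    · rintro ⟨_, h1, ρ, hρ⟩
      exact hCE.2 ⟨h1, by rw [hρ]; exact EReal.coe_ne_bot ρ⟩
  · constructor
    · intro h
      obtain ⟨h1, h2⟩ := hCE.1 h
      exact ⟨h1, hFin h1 h2⟩
    · rintro ⟨h1, ρ, hρ⟩
      exact hCE.2 ⟨h1, by rw [hρ]; exact EReal.coe_ne_bot ρ⟩
  · exact ⟨fun h => ⟨hG h, h⟩, fun h => h.2⟩

end Assemble
section MeasurePart

/-- Multiplication by a positive real constant as an order isomorphism of `EReal`. -/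
noncomputable def erealMulIso (l : ℝ) (hl : 0 < l) : EReal ≃o EReal where
  toFun x := (l : EReal) * x
  invFun x := ((l⁻¹ : ℝ) : EReal) * x
  left_inv x := by
    show ((l⁻¹ : ℝ) : EReal) * ((l : EReal) * x) = x
    rw [← mul_assoc, ← EReal.coe_mul, inv_mul_cancel₀ hl.ne', EReal.coe_one, one_mul]
  right_inv x := by
    show ((l : ℝ) : EReal) * (((l⁻¹ : ℝ) : EReal) * x) = x
    rw [← mul_assoc, ← EReal.coe_mul, mul_inv_cancel₀ hl.ne', EReal.coe_one, one_mul]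
  map_rel_iff' := by
    intro a b
    constructor
    · intro h
      have h' : (l : EReal) * a ≤ (l : EReal) * b := h
      have h2 := mul_le_mul_of_nonneg_left h'
        (by exact_mod_cast (inv_pos.2 hl).le : (0 : EReal) ≤ ((l⁻¹ : ℝ) : EReal))
      rwa [← mul_assoc, ← mul_assoc, ← EReal.coe_mul, inv_mul_cancel₀ hl.ne', EReal.coe_one,
        one_mul, one_mul] at h2
    · intro h
      show (l : EReal) * a ≤ (l : EReal) * b
      exact mul_le_mul_of_nonneg_left h (by exact_mod_cast hl.le : (0 : EReal) ≤ ((l : ℝ) : EReal))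

lemma limsup_coe_mul {ι : Type*} {lf : Filter ι} (l : ℝ) (hl : 0 < l) (F : ι → EReal) :
    Filter.limsup (fun i => (l : EReal) * F i) lf = (l : EReal) * Filter.limsup F lf :=
  ((erealMulIso l hl).limsup_apply (u := F) (f := lf)).symm

lemma pos_mul_ne_bot {l : ℝ} (hl : 0 < l) {X : EReal} (h : X ≠ ⊥) : (l : EReal) * X ≠ ⊥ := by
  induction X with
  | bot => exact absurd rfl h
  | coe r => rw [← EReal.coe_mul]; exact EReal.coe_ne_bot _
  | top => rw [EReal.coe_mul_top_of_pos hl]; exact top_ne_bot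

lemma coe_mul_add_distrib (l : ℝ) (hl : 0 < l) (X Y : EReal) :
    (l : EReal) * (X + Y) = (l : EReal) * X + (l : EReal) * Y := by
  induction X with
  | bot => simp [EReal.coe_mul_bot_of_pos hl]
  | coe r =>
    induction Y with
    | bot => simp [EReal.coe_mul_bot_of_pos hl, ← EReal.coe_mul]
    | coe s =>
      rw [← EReal.coe_add, ← EReal.coe_mul, ← EReal.coe_mul, ← EReal.coe_mul, ← EReal.coe_add,
        mul_add]
    | top =>
      rw [EReal.coe_add_top, EReal.coe_mul_top_of_pos hl, ← EReal.coe_mul, EReal.coe_add_top]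
  | top =>
    induction Y with
    | bot =>
      rw [EReal.add_bot, EReal.coe_mul_bot_of_pos hl, EReal.coe_mul_top_of_pos hl, EReal.add_bot]
    | coe s =>
      rw [EReal.top_add_coe, EReal.coe_mul_top_of_pos hl, ← EReal.coe_mul, EReal.top_add_coe]
    | top => rw [EReal.top_add_top, EReal.coe_mul_top_of_pos hl, EReal.top_add_top]

variable {ι : Type*} (lf : Filter ι) (μ : ι → Measure ℝ) (c : ι → ℝ)

lemma genLogMGF_zero [lf.NeBot] [∀ i, IsProbabilityMeasure (μ i)] :
    genLogMGF lf μ c 0 = 0 := by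
  rw [genLogMGF]
  have h : ∀ i, elog (c i) (∫⁻ x : ℝ, ENNReal.ofReal (Real.exp (0 * x / c i)) ∂ (μ i)) = 0 := by
    intro i
    have : ∀ x : ℝ, ENNReal.ofReal (Real.exp (0 * x / c i)) = 1 := by
      intro x; rw [zero_mul, zero_div, Real.exp_zero, ENNReal.ofReal_one]
    simp only [this, MeasureTheory.lintegral_one, measure_univ, elog, ENNReal.log_one, mul_zero]
  simp only [h]
  exact Filter.limsup_const _

lemma genLogMGF_convex [∀ i, IsProbabilityMeasure (μ i)] (hc : ∀ i, 0 < c i)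
    {a b l k : ℝ} (hl : 0 < l) (hk : 0 < k) (hlk : l + k = 1)
    (ha : genLogMGF lf μ c a ≠ ⊥) (hb : genLogMGF lf μ c b ≠ ⊥) :
    genLogMGF lf μ c (l * a + k * b) ≤
      (l : EReal) * genLogMGF lf μ c a + (k : EReal) * genLogMGF lf μ c b := by
  set Fa : ι → EReal :=
    fun i => elog (c i) (∫⁻ x : ℝ, ENNReal.ofReal (Real.exp (a * x / c i)) ∂ (μ i)) with hFa
  set Fb : ι → EReal :=
    fun i => elog (c i) (∫⁻ x : ℝ, ENNReal.ofReal (Real.exp (b * x / c i)) ∂ (μ i)) with hFb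
  have hpoint : ∀ i, elog (c i)
      (∫⁻ x : ℝ, ENNReal.ofReal (Real.exp ((l * a + k * b) * x / c i)) ∂ (μ i)) ≤
      (l : EReal) * Fa i + (k : EReal) * Fb i := by
    intro i
    set Ia := ∫⁻ x : ℝ, ENNReal.ofReal (Real.exp (a * x / c i)) ∂ (μ i) with hIa
    set Ib := ∫⁻ x : ℝ, ENNReal.ofReal (Real.exp (b * x / c i)) ∂ (μ i) with hIb
    have hmeas : ∀ t : ℝ, AEMeasurable
        (fun x : ℝ => ENNReal.ofReal (Real.exp (t * x / c i))) (μ i) :=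
      fun t => ((Real.measurable_exp.comp
        ((measurable_id.const_mul t).div_const (c i))).ennreal_ofReal).aemeasurable
    have hintegrand : ∀ x : ℝ, ENNReal.ofReal (Real.exp ((l * a + k * b) * x / c i)) =
        (ENNReal.ofReal (Real.exp (a * x / c i))) ^ l *
        (ENNReal.ofReal (Real.exp (b * x / c i))) ^ k := by
      intro x
      have e1 : (l * a + k * b) * x / c i = a * x / c i * l + b * x / c i * k := by ring
      rw [e1, Real.exp_add, Real.exp_mul, Real.exp_mul,
        ENNReal.ofReal_mul (by positivity),
        ENNReal.ofReal_rpow_of_pos (Real.exp_pos _), ENNReal.ofReal_rpow_of_pos (Real.exp_pos _)]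
    have hholder : (∫⁻ x : ℝ, ENNReal.ofReal (Real.exp ((l * a + k * b) * x / c i)) ∂ (μ i)) ≤
        Ia ^ l * Ib ^ k := by
      calc (∫⁻ x : ℝ, ENNReal.ofReal (Real.exp ((l * a + k * b) * x / c i)) ∂ (μ i))
          = ∫⁻ x : ℝ, (ENNReal.ofReal (Real.exp (a * x / c i))) ^ l *
              (ENNReal.ofReal (Real.exp (b * x / c i))) ^ k ∂ (μ i) := by
            apply MeasureTheory.lintegral_congr
            intro x; exact hintegrand x
        _ ≤ Ia ^ l * Ib ^ k :=
            ENNReal.lintegral_mul_norm_pow_le (hmeas a) (hmeas b) hl.le hk.le hlk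
    have hlog : ENNReal.log
        (∫⁻ x : ℝ, ENNReal.ofReal (Real.exp ((l * a + k * b) * x / c i)) ∂ (μ i)) ≤
        (l : EReal) * ENNReal.log Ia + (k : EReal) * ENNReal.log Ib := by
      calc ENNReal.log (∫⁻ x : ℝ, ENNReal.ofReal (Real.exp ((l * a + k * b) * x / c i)) ∂ (μ i))
          ≤ ENNReal.log (Ia ^ l * Ib ^ k) := ENNReal.log_monotone hholder
        _ = ENNReal.log (Ia ^ l) + ENNReal.log (Ib ^ k) := ENNReal.log_mul_add
        _ = (l : EReal) * ENNReal.log Ia + (k : EReal) * ENNReal.log Ib := by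
            rw [ENNReal.log_rpow, ENNReal.log_rpow]
    calc elog (c i) (∫⁻ x : ℝ, ENNReal.ofReal (Real.exp ((l * a + k * b) * x / c i)) ∂ (μ i))
        ≤ (c i : EReal) * ((l : EReal) * ENNReal.log Ia + (k : EReal) * ENNReal.log Ib) :=
          mul_le_mul_of_nonneg_left hlog (by exact_mod_cast (hc i).le)
      _ = (l : EReal) * Fa i + (k : EReal) * Fb i := by
          rw [coe_mul_add_distrib (c i) (hc i)]
          congr 1
          · rw [← mul_assoc, ← EReal.coe_mul, mul_comm (c i) l, EReal.coe_mul, mul_assoc]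
            rfl
          · rw [← mul_assoc, ← EReal.coe_mul, mul_comm (c i) k, EReal.coe_mul, mul_assoc]
            rfl
  have hls1 : genLogMGF lf μ c (l * a + k * b) ≤
      Filter.limsup (fun i => (l : EReal) * Fa i + (k : EReal) * Fb i) lf := by
    rw [genLogMGF]
    exact Filter.limsup_le_limsup (Filter.Eventually.of_forall hpoint)
  have hlsa : Filter.limsup (fun i => (l : EReal) * Fa i) lf =
      (l : EReal) * genLogMGF lf μ c a := limsup_coe_mul l hl Fa
  have hlsb : Filter.limsup (fun i => (k : EReal) * Fb i) lf =
      (k : EReal) * genLogMGF lf μ c b := limsup_coe_mul k hk Fb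
  calc genLogMGF lf μ c (l * a + k * b)
      ≤ Filter.limsup (fun i => (l : EReal) * Fa i + (k : EReal) * Fb i) lf := hls1
    _ ≤ Filter.limsup (fun i => (l : EReal) * Fa i) lf +
        Filter.limsup (fun i => (k : EReal) * Fb i) lf := by
        apply EReal.limsup_add_le
        · left; rw [hlsa]; exact pos_mul_ne_bot hl ha
        · right; rw [hlsb]; exact pos_mul_ne_bot hk hb
    _ = (l : EReal) * genLogMGF lf μ c a + (k : EReal) * genLogMGF lf μ c b := by
        rw [hlsa, hlsb]

end MeasurePart
theorem statement11
    {ι : Type*} (lf : Filter ι) [lf.NeBot]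
    (μ : ι → Measure ℝ) [∀ i, IsProbabilityMeasure (μ i)]
    (c : ι → ℝ) (hc : ∀ i, 0 < c i) (hc0 : Filter.Tendsto c lf (nhds (0 : ℝ)))
    (L : ℝ → EReal) (hL : L = genLogMGF lf μ c)
    :
    ((rightDerivE L 0 ≠ rightLimE (rightDerivE L) 0) ↔ (¬ LowerSemicontinuousWithinAt L (Set.Ici (0:ℝ)) 0 ∧ rightDerivE L 0 = ⊥ ∧ rightLimE (rightDerivE L) 0 ≠ ⊥)) ∧
    ((rightDerivE L 0 ≠ rightLimE (rightDerivE L) 0) ↔ (¬ LowerSemicontinuousWithinAt L (Set.Ici (0:ℝ)) 0 ∧ ∃ r : ℝ, rightLimE (rightDerivE L) 0 = (r : EReal))) ∧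
    ((rightDerivE L 0 ≠ rightLimE (rightDerivE L) 0) ↔ (rightDerivE L 0 = ⊥ ∧ rightLimE (rightDerivE L) 0 ≠ ⊥)) ∧
    ((rightDerivE L 0 ≠ rightLimE (rightDerivE L) 0) ↔ (¬ LowerSemicontinuousWithinAt L (Set.Ici (0:ℝ)) 0 ∧ rightDerivE L 0 = ⊥ ∧ ∃ r : ℝ, rightLimE (rightDerivE L) 0 = (r : EReal))) ∧
    ((rightDerivE L 0 ≠ rightLimE (rightDerivE L) 0) ↔ (rightDerivE L 0 = ⊥ ∧ ∃ r : ℝ, rightLimE (rightDerivE L) 0 = (r : EReal))) ∧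
    ((∃ r : ℝ, rightDerivE L 0 = (r : EReal)) ↔
      (rightDerivE L 0 = rightLimE (rightDerivE L) 0 ∧ ∃ r : ℝ, rightDerivE L 0 = (r : EReal))) := by
  subst hL
  set L := genLogMGF lf μ c with hLdef
  have h0 : L 0 = 0 := genLogMGF_zero lf μ c
  have hconvex : ∀ a b l k : ℝ, 0 < l → 0 < k → l + k = 1 → L a ≠ ⊥ → L b ≠ ⊥ →
      L (l * a + k * b) ≤ (l : EReal) * L a + (k : EReal) * L b :=
    fun a b l k h1 h2 h3 h4 h5 => genLogMGF_convex lf μ c hc h1 h2 h3 h4 h5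
  have hK2 : ∀ t s : ℝ, 0 < t → t < s → L s ≠ ⊥ → L t ≤ ((t / s : ℝ) : EReal) * L s := by
    intro t s ht hts hsb
    have hs : 0 < s := ht.trans hts
    have hl : 0 < 1 - t / s := by rw [sub_pos]; exact (div_lt_one hs).2 hts
    have hk : 0 < t / s := div_pos ht hs
    have h := hconvex 0 s (1 - t / s) (t / s) hl hk (by ring) (by rw [h0]; simp) hsb
    have harg : (1 - t / s) * 0 + (t / s) * s = t := by rw [mul_zero, zero_add, div_mul_cancel₀ t hs.ne']
    rw [harg, h0, mul_zero, zero_add] at h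
    exact h
  have hconv : ∀ u v w : ℝ, 0 < u → u < v → v < w → L u ≠ ⊥ → L w ≠ ⊥ →
      L v ≤ (((w - v) / (w - u) : ℝ) : EReal) * L u +
        (((v - u) / (w - u) : ℝ) : EReal) * L w := by
    intro u v w hu huv hvw hub hwb
    have hwu : (0:ℝ) < w - u := by linarith
    have hl : 0 < (w - v) / (w - u) := div_pos (by linarith) hwu
    have hk : 0 < (v - u) / (w - u) := div_pos (by linarith) hwu
    have hsum : (w - v) / (w - u) + (v - u) / (w - u) = 1 := by field_simp; ring
    have h := hconvex u w _ _ hl hk hsum hub hwb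
    have harg : (w - v) / (w - u) * u + (v - u) / (w - u) * w = v := by field_simp; ring
    rw [harg] at h
    exact h
  exact main_core L h0 hK2 hconv
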